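/- Let U, V be matrices with orthonormal columns such that U U* + V V* = I, and let Û, V̂ be matrices of the same respective sizes satisfying Û Û* + V̂ V̂* = I. Suppose ‖U* V̂‖ ≤ 1/2 and ‖Û* S (V̂* S)^{-1}‖ ≤ γ for some γ ≤ 1 (with V̂* S and V* S invertible). Then ‖U* S (V* S)^{-1}‖ ≤ (2 + 4γ)/(3 − 2γ). -/

import Mathlib

open MeasureTheory ProbabilityTheory Matrix Real

noncomputable section

set_option linter.unusedVariables false
set_option maxHeartbeats 1000000

instance matMS {m n : ℕ} : MeasurableSpace (Matrix (Fin m) (Fin n) ℝ) :=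
  MeasurableSpace.pi

/-- Spectral norm (ℓ₂ operator norm) of a real matrix. -/
def specNorm {m n : ℕ} (X : Matrix (Fin m) (Fin n) ℝ) : ℝ :=
  ‖LinearMap.toContinuousLinearMap (Matrix.toEuclideanLin X)‖

/-- Frobenius norm of a real matrix. -/
def frobNorm {m n : ℕ} (X : Matrix (Fin m) (Fin n) ℝ) : ℝ :=
  Real.sqrt (∑ i, ∑ j, (X i j) ^ 2)

/-- Schatten `p`-norm of a real matrix: the `ℓ_p` norm of its singular values. -/
def schattenNorm (p : ℝ) {m n : ℕ} (X : Matrix (Fin m) (Fin n) ℝ) : ℝ :=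
  (∑ i, Real.sqrt ((Matrix.isHermitian_conjTranspose_mul_self X).eigenvalues i) ^ p) ^ (1 / p)

/-- `L_{p,p}` norm of a random matrix: `(𝔼 ‖X‖_p^p)^{1/p}`. -/
def Lpp {Ω : Type*} [MeasurableSpace Ω] (μ : Measure Ω) (p : ℝ) {m n : ℕ}
    (X : Ω → Matrix (Fin m) (Fin n) ℝ) : ℝ :=
  (∫ ω, schattenNorm p (X ω) ^ p ∂μ) ^ (1 / p)

/-- Ky Fan `(2,k)` norm: the supremum over `d × k` matrices `P` with orthonormal
columns of `‖Pᵀ X‖_F`. -/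
def kyFan2k {d : ℕ} (k : ℕ) (X : Matrix (Fin d) (Fin d) ℝ) : ℝ :=
  sSup {c : ℝ | ∃ P : Matrix (Fin d) (Fin k) ℝ, Pᵀ * P = 1 ∧ c = frobNorm (Pᵀ * X)}

open scoped RealInnerProductSpace

section Stmt17Helpers


lemma specNorm_nonneg {m n : ℕ} (X : Matrix (Fin m) (Fin n) ℝ) : 0 ≤ specNorm X :=
  norm_nonneg _

lemma le_specNorm {m n : ℕ} (X : Matrix (Fin m) (Fin n) ℝ) (v : EuclideanSpace ℝ (Fin n)) :
    ‖Matrix.toEuclideanLin X v‖ ≤ specNorm X * ‖v‖ := by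
  simpa [specNorm] using (LinearMap.toContinuousLinearMap (Matrix.toEuclideanLin X)).le_opNorm v

lemma specNorm_le {m n : ℕ} {c : ℝ} (hc : 0 ≤ c) (X : Matrix (Fin m) (Fin n) ℝ)
    (h : ∀ v : EuclideanSpace ℝ (Fin n), ‖Matrix.toEuclideanLin X v‖ ≤ c * ‖v‖) :
    specNorm X ≤ c := by
  apply ContinuousLinearMap.opNorm_le_bound _ hc
  intro x; simpa using h x

lemma Lapp_mul {m n q : ℕ} (A : Matrix (Fin m) (Fin n) ℝ) (B : Matrix (Fin n) (Fin q) ℝ)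
    (v : EuclideanSpace ℝ (Fin q)) :
    Matrix.toEuclideanLin (A * B) v = Matrix.toEuclideanLin A (Matrix.toEuclideanLin B v) := by
  simp [Matrix.toEuclideanLin_apply, Matrix.mulVec_mulVec]

lemma Lapp_one {n : ℕ} (v : EuclideanSpace ℝ (Fin n)) :
    Matrix.toEuclideanLin (1 : Matrix (Fin n) (Fin n) ℝ) v = v := by
  simp [Matrix.toEuclideanLin_apply]

lemma inner_L {m n : ℕ} (X : Matrix (Fin m) (Fin n) ℝ) (u : EuclideanSpace ℝ (Fin n))
    (v : EuclideanSpace ℝ (Fin m)) :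
    ⟪Matrix.toEuclideanLin X u, v⟫ = ⟪u, Matrix.toEuclideanLin Xᵀ v⟫ := by
  simp only [Matrix.toEuclideanLin_apply, PiLp.inner_apply, RCLike.inner_apply, conj_trivial,
    Matrix.mulVec, dotProduct,
    Matrix.transpose_apply, Finset.sum_mul, Finset.mul_sum]
  rw [Finset.sum_comm]
  apply Finset.sum_congr rfl
  intro j _
  apply Finset.sum_congr rfl
  intro i _
  ring

lemma normL_sq {m n : ℕ} (X : Matrix (Fin m) (Fin n) ℝ) (u : EuclideanSpace ℝ (Fin n)) :
    ‖Matrix.toEuclideanLin X u‖ ^ 2 = ⟪u, Matrix.toEuclideanLin (Xᵀ * X) u⟫ := by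
  rw [← real_inner_self_eq_norm_sq, Lapp_mul]
  exact inner_L X u _

lemma eq_of_sq {x y : ℝ} (hx : 0 ≤ x) (hy : 0 ≤ y) (h : x ^ 2 = y ^ 2) : x = y := by
  rw [← Real.sqrt_sq hx, h, Real.sqrt_sq hy]

lemma iso_sq {d a : ℕ} (A : Matrix (Fin d) (Fin a) ℝ) (hA : Aᵀ * A = 1)
    (y : EuclideanSpace ℝ (Fin a)) : ‖Matrix.toEuclideanLin A y‖ ^ 2 = ‖y‖ ^ 2 := by
  rw [normL_sq, hA]
  rw [show Matrix.toEuclideanLin (1 : Matrix (Fin a) (Fin a) ℝ) y = y from Lapp_one y,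
    real_inner_self_eq_norm_sq]

lemma split_sq {d a b : ℕ} (A : Matrix (Fin d) (Fin a) ℝ) (B : Matrix (Fin d) (Fin b) ℝ)
    (hAB : A * Aᵀ + B * Bᵀ = 1) (z : EuclideanSpace ℝ (Fin d)) :
    ‖Matrix.toEuclideanLin Aᵀ z‖ ^ 2 + ‖Matrix.toEuclideanLin Bᵀ z‖ ^ 2 = ‖z‖ ^ 2 := by
  have hA := normL_sq Aᵀ z
  have hB := normL_sq Bᵀ z
  rw [Matrix.transpose_transpose] at hA hB
  rw [hA, hB, ← inner_add_right]
  have : Matrix.toEuclideanLin (A * Aᵀ) z + Matrix.toEuclideanLin (B * Bᵀ) z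
      = Matrix.toEuclideanLin (A * Aᵀ + B * Bᵀ) z := by
    rw [map_add Matrix.toEuclideanLin, LinearMap.add_apply]
  rw [this, hAB, Lapp_one, real_inner_self_eq_norm_sq]

lemma specNorm_transpose_le {m n : ℕ} (X : Matrix (Fin m) (Fin n) ℝ) :
    specNorm Xᵀ ≤ specNorm X := by
  apply specNorm_le (specNorm_nonneg X)
  intro z
  set t := ‖Matrix.toEuclideanLin Xᵀ z‖ with ht
  have h : t ^ 2 ≤ specNorm X * ‖z‖ * t := by
    have h1 : t ^ 2 = ⟪z, Matrix.toEuclideanLin X (Matrix.toEuclideanLin Xᵀ z)⟫ := by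
      rw [ht, ← real_inner_self_eq_norm_sq]
      have := inner_L Xᵀ z (Matrix.toEuclideanLin Xᵀ z)
      rwa [Matrix.transpose_transpose] at this
    have h2 : ⟪z, Matrix.toEuclideanLin X (Matrix.toEuclideanLin Xᵀ z)⟫
        ≤ ‖z‖ * ‖Matrix.toEuclideanLin X (Matrix.toEuclideanLin Xᵀ z)‖ := real_inner_le_norm _ _
    have h3 := le_specNorm X (Matrix.toEuclideanLin Xᵀ z)
    nlinarith [norm_nonneg z, norm_nonneg (Matrix.toEuclideanLin X (Matrix.toEuclideanLin Xᵀ z))]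
  rcases eq_or_lt_of_le (norm_nonneg (Matrix.toEuclideanLin Xᵀ z) : (0:ℝ) ≤ t) with h0 | h0
  · rw [ht, ← h0]
    exact mul_nonneg (specNorm_nonneg X) (norm_nonneg z)
  · nlinarith [h0]

lemma low_bound {d k j : ℕ} (U : Matrix (Fin d) (Fin j) ℝ) (V Vh : Matrix (Fin d) (Fin k) ℝ)
    (hUV : U * Uᵀ + V * Vᵀ = 1) (hVh : Vhᵀ * Vh = 1)
    (h1 : specNorm (Uᵀ * Vh) ≤ 1 / 2) :
    ∀ y : EuclideanSpace ℝ (Fin k),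
      Real.sqrt 3 / 2 * ‖y‖ ≤ ‖Matrix.toEuclideanLin (Vᵀ * Vh) y‖ := by
  intro y
  have hw := iso_sq Vh hVh y
  have hsplit := split_sq U V hUV (Matrix.toEuclideanLin Vh y)
  have hUw : ‖Matrix.toEuclideanLin Uᵀ (Matrix.toEuclideanLin Vh y)‖ ≤ 1 / 2 * ‖y‖ := by
    rw [← Lapp_mul]
    calc ‖Matrix.toEuclideanLin (Uᵀ * Vh) y‖ ≤ specNorm (Uᵀ * Vh) * ‖y‖ := le_specNorm _ y
      _ ≤ 1 / 2 * ‖y‖ := mul_le_mul_of_nonneg_right h1 (norm_nonneg y)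
  rw [Lapp_mul]
  have hr3 : Real.sqrt 3 ^ 2 = 3 := Real.sq_sqrt (by norm_num)
  have hr0 : (0:ℝ) ≤ Real.sqrt 3 := Real.sqrt_nonneg 3
  nlinarith [norm_nonneg y, norm_nonneg (Matrix.toEuclideanLin Vᵀ (Matrix.toEuclideanLin Vh y)),
    norm_nonneg (Matrix.toEuclideanLin Uᵀ (Matrix.toEuclideanLin Vh y)),
    sq_nonneg (‖Matrix.toEuclideanLin Vᵀ (Matrix.toEuclideanLin Vh y)‖ - Real.sqrt 3 / 2 * ‖y‖),
    sq_nonneg (‖Matrix.toEuclideanLin Vᵀ (Matrix.toEuclideanLin Vh y)‖ + Real.sqrt 3 / 2 * ‖y‖)]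

lemma lowT_bound {d k j : ℕ} (U : Matrix (Fin d) (Fin j) ℝ) (V Vh : Matrix (Fin d) (Fin k) ℝ)
    (hUV : U * Uᵀ + V * Vᵀ = 1) (hVh : Vhᵀ * Vh = 1)
    (h1 : specNorm (Uᵀ * Vh) ≤ 1 / 2) :
    ∀ z : EuclideanSpace ℝ (Fin k),
      Real.sqrt 3 / 2 * ‖z‖ ≤ ‖Matrix.toEuclideanLin (Vhᵀ * V) z‖ := by
  have hlow := low_bound U V Vh hUV hVh h1
  have hr3 : Real.sqrt 3 ^ 2 = 3 := Real.sq_sqrt (by norm_num)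
  have hr0 : (0:ℝ) < Real.sqrt 3 := by
    rw [show (0:ℝ) = Real.sqrt 0 from (Real.sqrt_zero).symm]
    exact Real.sqrt_lt_sqrt le_rfl (by norm_num)
  -- injectivity of mulVec
  have hinj : Function.Injective ((Vᵀ * Vh).mulVec) := by
    intro x x' hxx
    have hL : Matrix.toEuclideanLin (Vᵀ * Vh) ((WithLp.equiv 2 _).symm x)
        = Matrix.toEuclideanLin (Vᵀ * Vh) ((WithLp.equiv 2 _).symm x') := by
      rw [WithLp.equiv_symm_apply, Matrix.toEuclideanLin_apply_piLp_toLp, Matrix.toEuclideanLin_apply_piLp_toLp, hxx]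
    have hz : Matrix.toEuclideanLin (Vᵀ * Vh)
        ((WithLp.equiv 2 _).symm x - (WithLp.equiv 2 _).symm x') = 0 := by
      rw [map_sub, hL, sub_self]
    have := hlow ((WithLp.equiv 2 _).symm x - (WithLp.equiv 2 _).symm x')
    rw [hz, norm_zero] at this
    have h0 : ‖(WithLp.equiv 2 (Fin k → ℝ)).symm x - (WithLp.equiv 2 (Fin k → ℝ)).symm x'‖ = 0 := by
      nlinarith [norm_nonneg ((WithLp.equiv 2 (Fin k → ℝ)).symm x - (WithLp.equiv 2 (Fin k → ℝ)).symm x')]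
    have := sub_eq_zero.mp (norm_eq_zero.mp h0)
    exact (WithLp.equiv 2 (Fin k → ℝ)).symm.injective this
  have hdet : IsUnit (Vᵀ * Vh).det :=
    (Matrix.isUnit_iff_isUnit_det _).mp (Matrix.mulVec_injective_iff_isUnit.mp hinj)
  have hMM : (Vᵀ * Vh) * (Vᵀ * Vh)⁻¹ = 1 := Matrix.mul_nonsing_inv _ hdet
  have hinv : specNorm ((Vᵀ * Vh)⁻¹) ≤ 2 / Real.sqrt 3 := by
    apply specNorm_le (by positivity)
    intro z
    have h := hlow (Matrix.toEuclideanLin (Vᵀ * Vh)⁻¹ z)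
    rw [← Lapp_mul, hMM, Lapp_one] at h
    rw [div_mul_eq_mul_div, le_div_iff₀ hr0]
    nlinarith [h]
  have hinvT : specNorm (((Vᵀ * Vh)⁻¹)ᵀ) ≤ 2 / Real.sqrt 3 :=
    le_trans (specNorm_transpose_le _) hinv
  intro z
  have hTid : ((Vᵀ * Vh)⁻¹)ᵀ * (Vhᵀ * V) = 1 := by
    have : (Vᵀ * Vh)ᵀ = Vhᵀ * V := by
      rw [Matrix.transpose_mul, Matrix.transpose_transpose]
    rw [← this, ← Matrix.transpose_mul]
    rw [show (Vᵀ * Vh) * ((Vᵀ * Vh)⁻¹) = 1 from hMM]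
    exact Matrix.transpose_one
  have h0 : z = Matrix.toEuclideanLin (((Vᵀ * Vh)⁻¹)ᵀ)
      (Matrix.toEuclideanLin (Vhᵀ * V) z) := by
    rw [← Lapp_mul, hTid, Lapp_one]
  have h4 : ‖z‖ ≤ 2 / Real.sqrt 3 * ‖Matrix.toEuclideanLin (Vhᵀ * V) z‖ := by
    calc ‖z‖ = ‖Matrix.toEuclideanLin (((Vᵀ * Vh)⁻¹)ᵀ) (Matrix.toEuclideanLin (Vhᵀ * V) z)‖ := by
          rw [← h0]
      _ ≤ specNorm (((Vᵀ * Vh)⁻¹)ᵀ) * ‖Matrix.toEuclideanLin (Vhᵀ * V) z‖ := le_specNorm _ _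
      _ ≤ 2 / Real.sqrt 3 * ‖Matrix.toEuclideanLin (Vhᵀ * V) z‖ :=
          mul_le_mul_of_nonneg_right hinvT (norm_nonneg _)
    
  have hr3' : Real.sqrt 3 ^ 2 = 3 := hr3
  rw [div_mul_eq_mul_div, div_le_iff₀ (by norm_num : (0:ℝ) < 2)]
  rw [div_mul_eq_mul_div, le_div_iff₀ hr0] at h4
  nlinarith [norm_nonneg (Matrix.toEuclideanLin (Vhᵀ * V) z), h4]

lemma cross_bound {d k j : ℕ} (U Uh : Matrix (Fin d) (Fin j) ℝ) (V Vh : Matrix (Fin d) (Fin k) ℝ)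
    (hV : Vᵀ * V = 1) (hUV : U * Uᵀ + V * Vᵀ = 1)
    (hVh : Vhᵀ * Vh = 1) (hUVh : Uh * Uhᵀ + Vh * Vhᵀ = 1)
    (h1 : specNorm (Uᵀ * Vh) ≤ 1 / 2) :
    specNorm (Vᵀ * Uh) ≤ 1 / 2 := by
  have hlowT := lowT_bound U V Vh hUV hVh h1
  have hr3 : Real.sqrt 3 ^ 2 = 3 := Real.sq_sqrt (by norm_num)
  have hr0 : (0:ℝ) ≤ Real.sqrt 3 := Real.sqrt_nonneg 3
  have hUhV : specNorm (Uhᵀ * V) ≤ 1 / 2 := by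
    apply specNorm_le (by norm_num)
    intro p
    have hzp := iso_sq V hV p
    have hsp := split_sq Uh Vh hUVh (Matrix.toEuclideanLin V p)
    have hVhVp : Real.sqrt 3 / 2 * ‖p‖
        ≤ ‖Matrix.toEuclideanLin Vhᵀ (Matrix.toEuclideanLin V p)‖ := by
      rw [← Lapp_mul]; exact hlowT p
    rw [← Lapp_mul] at hsp
    nlinarith [norm_nonneg p, norm_nonneg (Matrix.toEuclideanLin (Uhᵀ * V) p),
      norm_nonneg (Matrix.toEuclideanLin Vhᵀ (Matrix.toEuclideanLin V p)),
      mul_nonneg (mul_nonneg hr0 (by norm_num : (0:ℝ) ≤ 1/2)) (norm_nonneg p)]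
  calc specNorm (Vᵀ * Uh) = specNorm ((Uhᵀ * V)ᵀ) := by
        rw [Matrix.transpose_mul, Matrix.transpose_transpose]
    _ ≤ specNorm (Uhᵀ * V) := specNorm_transpose_le _
    _ ≤ 1 / 2 := hUhV

end Stmt17Helpers

/-- stability of `‖Uᵀ S (Vᵀ S)⁻¹‖` under change of reference frame. -/
theorem stmt_17 (d k : ℕ) (hk : 0 < k) (hkd : k < d)
    (U Uh : Matrix (Fin d) (Fin (d - k)) ℝ) (V Vh : Matrix (Fin d) (Fin k) ℝ)
    (hV : Vᵀ * V = 1) (hU : Uᵀ * U = 1) (hUV : U * Uᵀ + V * Vᵀ = 1)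
    (hVh : Vhᵀ * Vh = 1) (hUh : Uhᵀ * Uh = 1) (hUVh : Uh * Uhᵀ + Vh * Vhᵀ = 1)
    (S : Matrix (Fin d) (Fin k) ℝ)
    (hSV : IsUnit (Vᵀ * S).det) (hSVh : IsUnit (Vhᵀ * S).det)
    (γ : ℝ) (hγ1 : γ ≤ 1)
    (h1 : specNorm (Uᵀ * Vh) ≤ 1 / 2)
    (h2 : specNorm (Uhᵀ * S * (Vhᵀ * S)⁻¹) ≤ γ) :
    specNorm (Uᵀ * S * (Vᵀ * S)⁻¹) ≤ (2 + 4 * γ) / (3 - 2 * γ) := by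
  have hγ0 : 0 ≤ γ := le_trans (specNorm_nonneg _) h2
  have hr3 : Real.sqrt 3 ^ 2 = 3 := Real.sq_sqrt (by norm_num)
  have hr17 : (1.7 : ℝ) ≤ Real.sqrt 3 := by
    have : (1.7 : ℝ) = Real.sqrt (1.7 ^ 2) := (Real.sqrt_sq (by norm_num)).symm
    rw [this]
    exact Real.sqrt_le_sqrt (by norm_num)
  have hVhS : (Vhᵀ * S) * (Vhᵀ * S)⁻¹ = 1 := Matrix.mul_nonsing_inv _ hSVh
  have hVhS' : (Vhᵀ * S)⁻¹ * (Vhᵀ * S) = 1 := Matrix.nonsing_inv_mul _ hSVh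
  have hVS : (Vᵀ * S) * (Vᵀ * S)⁻¹ = 1 := Matrix.mul_nonsing_inv _ hSV
  -- matrix identities
  have hT : S * (Vhᵀ * S)⁻¹ = Uh * (Uhᵀ * S * (Vhᵀ * S)⁻¹) + Vh := by
    calc S * (Vhᵀ * S)⁻¹ = 1 * (S * (Vhᵀ * S)⁻¹) := (Matrix.one_mul _).symm
      _ = (Uh * Uhᵀ + Vh * Vhᵀ) * (S * (Vhᵀ * S)⁻¹) := by rw [hUVh]
      _ = Uh * (Uhᵀ * S * (Vhᵀ * S)⁻¹) + Vh * ((Vhᵀ * S) * (Vhᵀ * S)⁻¹) := by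
          simp only [Matrix.add_mul, Matrix.mul_assoc]
      _ = Uh * (Uhᵀ * S * (Vhᵀ * S)⁻¹) + Vh := by rw [hVhS, Matrix.mul_one]
  have hWN : Uᵀ * S * (Vᵀ * S)⁻¹
      = (Uᵀ * (S * (Vhᵀ * S)⁻¹)) * ((Vhᵀ * S) * (Vᵀ * S)⁻¹) := by
    have e1 : (Uᵀ * (S * (Vhᵀ * S)⁻¹)) * ((Vhᵀ * S) * (Vᵀ * S)⁻¹)
        = ((Uᵀ * S) * ((Vhᵀ * S)⁻¹ * (Vhᵀ * S))) * (Vᵀ * S)⁻¹ := by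
      simp only [Matrix.mul_assoc]
    rw [e1, hVhS', Matrix.mul_one]
  have hVN : (Vᵀ * (S * (Vhᵀ * S)⁻¹)) * ((Vhᵀ * S) * (Vᵀ * S)⁻¹) = 1 := by
    have e1 : (Vᵀ * (S * (Vhᵀ * S)⁻¹)) * ((Vhᵀ * S) * (Vᵀ * S)⁻¹)
        = ((Vᵀ * S) * ((Vhᵀ * S)⁻¹ * (Vhᵀ * S))) * (Vᵀ * S)⁻¹ := by
      simp only [Matrix.mul_assoc]
    rw [e1, hVhS', Matrix.mul_one, hVS]
  -- analytic part
  have hVUh : specNorm (Vᵀ * Uh) ≤ 1 / 2 := cross_bound U Uh V Vh hV hUV hVh hUVh h1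
  have hlow := low_bound U V Vh hUV hVh h1
  have hden : (0:ℝ) < 3 - 2 * γ := by linarith
  have hc0 : (0:ℝ) ≤ (2 + 4 * γ) / (3 - 2 * γ) := by positivity
  apply specNorm_le hc0
  intro z
  set y : EuclideanSpace ℝ (Fin k) :=
    Matrix.toEuclideanLin ((Vhᵀ * S) * (Vᵀ * S)⁻¹) z with hy
  have hz : z = Matrix.toEuclideanLin (Vᵀ * (S * (Vhᵀ * S)⁻¹)) y := by
    rw [hy, ← Lapp_mul, hVN, Lapp_one]
  have hWz : Matrix.toEuclideanLin (Uᵀ * S * (Vᵀ * S)⁻¹) z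
      = Matrix.toEuclideanLin (Uᵀ * (S * (Vhᵀ * S)⁻¹)) y := by
    rw [hWN, Lapp_mul]
  set p : EuclideanSpace ℝ (Fin (d - k)) :=
    Matrix.toEuclideanLin (Uhᵀ * S * (Vhᵀ * S)⁻¹) y with hp
  have hs : ‖p‖ ≤ γ * ‖y‖ := by
    calc ‖p‖ ≤ specNorm (Uhᵀ * S * (Vhᵀ * S)⁻¹) * ‖y‖ := le_specNorm _ y
      _ ≤ γ * ‖y‖ := mul_le_mul_of_nonneg_right h2 (norm_nonneg y)
  have hTy : Matrix.toEuclideanLin (S * (Vhᵀ * S)⁻¹) y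
      = Matrix.toEuclideanLin Uh p + Matrix.toEuclideanLin Vh y := by
    rw [hT, map_add Matrix.toEuclideanLin, LinearMap.add_apply, Lapp_mul]
  -- bound a
  have haSplit : Matrix.toEuclideanLin (Uᵀ * (S * (Vhᵀ * S)⁻¹)) y
      = Matrix.toEuclideanLin Uᵀ (Matrix.toEuclideanLin Uh p)
        + Matrix.toEuclideanLin Uᵀ (Matrix.toEuclideanLin Vh y) := by
    rw [Lapp_mul, hTy, map_add]
  have hbSplit : Matrix.toEuclideanLin (Vᵀ * (S * (Vhᵀ * S)⁻¹)) y
      = Matrix.toEuclideanLin Vᵀ (Matrix.toEuclideanLin Uh p)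
        + Matrix.toEuclideanLin Vᵀ (Matrix.toEuclideanLin Vh y) := by
    rw [Lapp_mul, hTy, map_add]
  have hup : ‖Matrix.toEuclideanLin Uh p‖ = ‖p‖ :=
    eq_of_sq (norm_nonneg _) (norm_nonneg _) (iso_sq Uh hUh p)
  have hau : ‖Matrix.toEuclideanLin Uᵀ (Matrix.toEuclideanLin Uh p)‖ ≤ ‖p‖ := by
    have := split_sq U V hUV (Matrix.toEuclideanLin Uh p)
    nlinarith [norm_nonneg (Matrix.toEuclideanLin Uᵀ (Matrix.toEuclideanLin Uh p)),
      norm_nonneg (Matrix.toEuclideanLin Vᵀ (Matrix.toEuclideanLin Uh p)),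
      norm_nonneg p, hup]
  have hav : ‖Matrix.toEuclideanLin Uᵀ (Matrix.toEuclideanLin Vh y)‖ ≤ 1 / 2 * ‖y‖ := by
    rw [← Lapp_mul]
    calc ‖Matrix.toEuclideanLin (Uᵀ * Vh) y‖ ≤ specNorm (Uᵀ * Vh) * ‖y‖ := le_specNorm _ y
      _ ≤ 1 / 2 * ‖y‖ := mul_le_mul_of_nonneg_right h1 (norm_nonneg y)
  have ha : ‖Matrix.toEuclideanLin (Uᵀ * (S * (Vhᵀ * S)⁻¹)) y‖ ≤ ‖p‖ + 1 / 2 * ‖y‖ := by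
    rw [haSplit]
    calc ‖_ + _‖ ≤ ‖Matrix.toEuclideanLin Uᵀ (Matrix.toEuclideanLin Uh p)‖
          + ‖Matrix.toEuclideanLin Uᵀ (Matrix.toEuclideanLin Vh y)‖ := norm_add_le _ _
      _ ≤ ‖p‖ + 1 / 2 * ‖y‖ := add_le_add hau hav
  -- bound b
  have hbu : ‖Matrix.toEuclideanLin Vᵀ (Matrix.toEuclideanLin Uh p)‖ ≤ 1 / 2 * ‖p‖ := by
    rw [← Lapp_mul]
    calc ‖Matrix.toEuclideanLin (Vᵀ * Uh) p‖ ≤ specNorm (Vᵀ * Uh) * ‖p‖ := le_specNorm _ p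
      _ ≤ 1 / 2 * ‖p‖ := mul_le_mul_of_nonneg_right hVUh (norm_nonneg p)
  have hbw : Real.sqrt 3 / 2 * ‖y‖
      ≤ ‖Matrix.toEuclideanLin Vᵀ (Matrix.toEuclideanLin Vh y)‖ := by
    rw [← Lapp_mul]; exact hlow y
  have hb : Real.sqrt 3 / 2 * ‖y‖ - 1 / 2 * ‖p‖
      ≤ ‖Matrix.toEuclideanLin (Vᵀ * (S * (Vhᵀ * S)⁻¹)) y‖ := by
    have htri : ‖Matrix.toEuclideanLin Vᵀ (Matrix.toEuclideanLin Vh y)‖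
        ≤ ‖Matrix.toEuclideanLin (Vᵀ * (S * (Vhᵀ * S)⁻¹)) y‖
          + ‖Matrix.toEuclideanLin Vᵀ (Matrix.toEuclideanLin Uh p)‖ := by
      rw [hbSplit]
      have := norm_sub_le (Matrix.toEuclideanLin Vᵀ (Matrix.toEuclideanLin Uh p)
        + Matrix.toEuclideanLin Vᵀ (Matrix.toEuclideanLin Vh y))
        (Matrix.toEuclideanLin Vᵀ (Matrix.toEuclideanLin Uh p))
      simpa [add_sub_cancel_left] using this
    linarith
  -- final
  rw [hWz, hz, div_mul_eq_mul_div, le_div_iff₀ hden]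
  nlinarith [ha, hb, hs, norm_nonneg y, norm_nonneg p,
    norm_nonneg (Matrix.toEuclideanLin (Vᵀ * (S * (Vhᵀ * S)⁻¹)) y),
    mul_nonneg (mul_nonneg (by linarith : (0:ℝ) ≤ 1 + 2 * γ) (norm_nonneg y))
      (by linarith : (0:ℝ) ≤ Real.sqrt 3 - 1.7),
    mul_nonneg hγ0 (norm_nonneg y),
    mul_le_mul_of_nonneg_left hb (by linarith : (0:ℝ) ≤ 2 + 4 * γ),
    mul_le_mul_of_nonneg_right ha (by linarith : (0:ℝ) ≤ 3 - 2 * γ)]
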